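/- arXiv:math/0211234 — 2 statements merged into one kernel-verified Lean document; each statement's English description precedes it below -/
import Mathlib

section
/- With τ₀ = 0.32: for all ρ ∈ [0, 1] and all s ∈ [0, 1.301], one has I(circPerim0(ρπ/3 + 2s), 5, τ₀ − s, ρ) > 0, i.e., √(4π·a − a²) − (0.32 − s)·B' − ρ·p₅ > 0 where a = ρπ/3 + 2s. (Note a ≤ π/3 + 2.602 < 2π, so the formula for circPerim0 is in its valid monotone range.) -/
open Real

/-- Perimeter of a regular spherical `n`-gon of area `x` on the unit sphere. -/
noncomputable def regPerim (x n : ℝ) : ℝ :=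
  n * Real.arccos ((Real.cos (2 * π / n) +
      (Real.cos ((π - (2 * π - x) / n) / 2)) ^ 2) /
      (Real.sin ((π - (2 * π - x) / n) / 2)) ^ 2)

/-- Circumference of a circle on the unit sphere enclosing area `a`. -/
noncomputable def circPerim0 (a : ℝ) : ℝ := Real.sqrt (4 * π * a - a ^ 2)

/-- Perimeter of the regular spherical pentagon of area `π/3`. -/
noncomputable def p5 : ℝ := 5 * Real.arccos ((4 * Real.cos (2 * π / 5) + 1) / 3)

/-- Derivative at `n = 5` of `n ↦ regPerim (π/3) n`. -/
noncomputable def p5' : ℝ := deriv (fun n : ℝ => regPerim (π / 3) n) 5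

/-- `B' = -∂₁ regPerim (π/3, 5)`. -/
noncomputable def B' : ℝ := - deriv (fun x : ℝ => regPerim x 5) (π / 3)

/-- The isoperimetric functional `I(ℓ, n, t, ρ)`. -/
noncomputable def Ifun (ℓ n t ρ : ℝ) : ℝ := ℓ - t * B' + (5 - n) * p5' - ρ * p5

lemma sqrt5_gt : (2.2360679:ℝ) < √5 := by
  rw [show (2.2360679:ℝ) = √(2.2360679^2) by rw [Real.sqrt_sq]; norm_num]
  exact Real.sqrt_lt_sqrt (by positivity) (by norm_num)

lemma sqrt5_lt : √5 < 2.2360680 := by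
  rw [show (2.2360680:ℝ) = √(2.2360680^2) by rw [Real.sqrt_sq]; norm_num]
  exact Real.sqrt_lt_sqrt (by norm_num) (by norm_num)

lemma sqrt3_gt : (1.7320508:ℝ) < √3 := by
  rw [show (1.7320508:ℝ) = √(1.7320508^2) by rw [Real.sqrt_sq]; norm_num]
  exact Real.sqrt_lt_sqrt (by positivity) (by norm_num)

lemma sqrt3_lt : √3 < 1.7320509 := by
  rw [show (1.7320509:ℝ) = √(1.7320509^2) by rw [Real.sqrt_sq]; norm_num]
  exact Real.sqrt_lt_sqrt (by norm_num) (by norm_num)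

lemma sqrt15_gt : (3.8729833:ℝ) < √15 := by
  rw [show (3.8729833:ℝ) = √(3.8729833^2) by rw [Real.sqrt_sq]; norm_num]
  exact Real.sqrt_lt_sqrt (by positivity) (by norm_num)

lemma sqrt15_lt : √15 < 3.8729834 := by
  rw [show (3.8729834:ℝ) = √(3.8729834^2) by rw [Real.sqrt_sq]; norm_num]
  exact Real.sqrt_lt_sqrt (by norm_num) (by norm_num)

lemma cos_two_pi_div_five : Real.cos (2 * π / 5) = (√5 - 1) / 4 := by
  have h := Real.cos_pi_div_five
  have h2 : Real.cos (2 * (π/5)) = 2 * Real.cos (π/5) ^ 2 - 1 := Real.cos_two_mul _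
  have h5 : (√5) ^ 2 = 5 := Real.sq_sqrt (by norm_num)
  rw [show 2 * π / 5 = 2 * (π/5) by ring, h2, h]
  nlinarith [h5]

lemma arccos_le_of_cos_le {y θ : ℝ} (hy1 : -1 ≤ y) (hy2 : y ≤ 1)
    (hθ0 : 0 ≤ θ) (h : Real.cos θ ≤ y) : Real.arccos y ≤ θ := by
  by_contra hlt
  push_neg at hlt
  have := Real.cos_lt_cos_of_nonneg_of_le_pi hθ0 (Real.arccos_le_pi y) hlt
  rw [Real.cos_arccos hy1 hy2] at this
  linarith

lemma cos074_le : Real.cos 0.74 ≤ √5 / 3 := by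
  have hb := Real.cos_bound (x := 0.74) (by rw [abs_of_nonneg]; norm_num; norm_num)
  have h1 : Real.cos 0.74 ≤ 1 - (0.74:ℝ)^2/2 + |(0.74:ℝ)|^4 * (5/96) := by
    have := abs_sub_le_iff.1 hb
    linarith [this.1]
  have h2 : (1:ℝ) - (0.74:ℝ)^2/2 + |(0.74:ℝ)|^4 * (5/96) ≤ 0.7419 := by
    rw [abs_of_nonneg (by norm_num)]; norm_num
  have h3 : (0.7419:ℝ) ≤ √5/3 := by
    have := sqrt5_gt; linarith

  linarith

lemma p5_eq : p5 = 5 * Real.arccos (√5 / 3) := by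
  rw [p5, cos_two_pi_div_five]
  norm_num
  ring_nf

lemma p5_pos : 0 < p5 := by
  rw [p5_eq]
  have : √5/3 < 1 := by have := sqrt5_lt; linarith
  have := Real.arccos_pos.mpr this
  linarith

lemma p5_le : p5 ≤ 3.70 := by
  rw [p5_eq]
  have h1 : √5/3 ≤ 1 := by have := sqrt5_lt; linarith
  have h0 : (-1:ℝ) ≤ √5/3 := by
    have := Real.sqrt_nonneg (5:ℝ); linarith
  have hπ : (0.74:ℝ) ≤ π := by have := Real.pi_gt_d6; linarith
  have := arccos_le_of_cos_le h0 h1 (by norm_num) cos074_le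
  linarith

lemma deriv_regPerim5 :
    HasDerivAt (fun x : ℝ => regPerim x 5) ((3 * √3 + √15) / 6) (π/3) := by
  have h5 : (√5) ^ 2 = 5 := Real.sq_sqrt (by norm_num)
  have h3 : (√3) ^ 2 = 3 := Real.sq_sqrt (by norm_num)
  have s5pos : (0:ℝ) < √5 := Real.sqrt_pos.mpr (by norm_num)
  have s5lt3 : √5 < 3 := by nlinarith
  have hbval : (π - (2 * π - π/3) / 5) / 2 = π/3 := by ring
  have hb : HasDerivAt (fun x : ℝ => (π - (2 * π - x) / 5) / 2) (1/10) (π/3) := by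
    have h1 : HasDerivAt (fun x : ℝ => 2 * π - x) (-1) (π/3) :=
      (hasDerivAt_id _).const_sub (2 * π)
    have h2 := ((h1.div_const 5).const_sub π).div_const 2
    refine h2.congr_deriv ?_; norm_num
  have hcosb : HasDerivAt (fun x : ℝ => Real.cos ((π - (2 * π - x) / 5) / 2))
      (-Real.sin (π/3) * (1/10)) (π/3) := by
    have := hb.cos
    rwa [hbval] at this
  have hsinb : HasDerivAt (fun x : ℝ => Real.sin ((π - (2 * π - x) / 5) / 2))
      (Real.cos (π/3) * (1/10)) (π/3) := by
    have := hb.sin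
    rwa [hbval] at this
  have hcv : Real.cos ((π - (2 * π - π/3) / 5) / 2) = 1/2 := by
    rw [hbval, Real.cos_pi_div_three]
  have hsv : Real.sin ((π - (2 * π - π/3) / 5) / 2) = √3/2 := by
    rw [hbval, Real.sin_pi_div_three]
  have hspi3 : Real.sin (π/3) = √3/2 := Real.sin_pi_div_three
  have hcpi3 : Real.cos (π/3) = 1/2 := Real.cos_pi_div_three
  have hnum : HasDerivAt (fun x : ℝ => Real.cos (2*π/5) +
      (Real.cos ((π - (2 * π - x) / 5) / 2)) ^ 2)
      (-√3/20) (π/3) := by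
    have := (hcosb.pow 2).const_add (Real.cos (2*π/5))
    refine this.congr_deriv ?_
    rw [hcv, hspi3]; ring
  have hden : HasDerivAt (fun x : ℝ => (Real.sin ((π - (2 * π - x) / 5) / 2)) ^ 2)
      (√3/20) (π/3) := by
    have := hsinb.pow 2
    refine this.congr_deriv ?_
    rw [hsv, hcpi3]; ring
  have hdenval : (Real.sin ((π - (2 * π - π/3) / 5) / 2)) ^ 2 = 3/4 := by
    rw [hsv]; rw [div_pow]; rw [h3]; norm_num
  have hnumval : Real.cos (2*π/5) + (Real.cos ((π - (2 * π - π/3) / 5) / 2)) ^ 2 = √5/4 := by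
    rw [hcv, cos_two_pi_div_five]; ring
  have hg : HasDerivAt (fun x : ℝ => (Real.cos (2*π/5) +
      (Real.cos ((π - (2 * π - x) / 5) / 2)) ^ 2) /
      (Real.sin ((π - (2 * π - x) / 5) / 2)) ^ 2)
      (-(√3 * (3 + √5)) / 45) (π/3) := by
    have := hnum.div hden (by rw [hdenval]; norm_num)
    refine this.congr_deriv ?_
    rw [hdenval, hnumval]; ring
  have hgval : (Real.cos (2*π/5) + (Real.cos ((π - (2 * π - π/3) / 5) / 2)) ^ 2) /
      (Real.sin ((π - (2 * π - π/3) / 5) / 2)) ^ 2 = √5/3 := by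
    rw [hdenval, hnumval]; ring
  have hy1 : √5/3 ≠ -1 := by intro h; nlinarith
  have hy2 : √5/3 ≠ 1 := by intro h; nlinarith
  have harc := (Real.hasDerivAt_arccos hy1 hy2)
  have hsq : Real.sqrt (1 - (√5/3)^2) = 2/3 := by
    rw [show 1 - (√5/3)^2 = 4/9 by rw [div_pow, h5]; norm_num]
    rw [show (4:ℝ)/9 = (2/3)^2 by norm_num, Real.sqrt_sq (by norm_num)]
  have hcomp : HasDerivAt (fun x : ℝ => Real.arccos ((Real.cos (2*π/5) +
      (Real.cos ((π - (2 * π - x) / 5) / 2)) ^ 2) /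
      (Real.sin ((π - (2 * π - x) / 5) / 2)) ^ 2))
      ((3 * √3 + √15) / 30) (π/3) := by
    have h := HasDerivAt.comp (π/3) (hgval ▸ harc) hg
    refine h.congr_deriv ?_
    rw [hgval, hsq]
    have h15 : √15 = √3 * √5 := by
      rw [← Real.sqrt_mul (by norm_num)]; norm_num
    rw [h15]; field_simp; ring
  have final := hcomp.const_mul (5:ℝ)
  have heq : (fun x : ℝ => regPerim x 5) = fun x : ℝ => 5 * Real.arccos ((Real.cos (2*π/5) +
      (Real.cos ((π - (2 * π - x) / 5) / 2)) ^ 2) /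
      (Real.sin ((π - (2 * π - x) / 5) / 2)) ^ 2) := by
    funext x; simp [regPerim]
  rw [heq]
  refine final.congr_deriv ?_
  ring

lemma B'_eq : B' = -((3 * √3 + √15) / 6) := by
  rw [B', deriv_regPerim5.deriv]

lemma D_lb : (1.5115:ℝ) ≤ (3 * √3 + √15) / 6 := by
  have := sqrt3_gt; have := sqrt15_gt; linarith

lemma D_ub : (3 * √3 + √15) / 6 ≤ 1.5116 := by
  have := sqrt3_lt; have := sqrt15_lt; linarith

lemma quad_main {ρ s : ℝ} (hρ0 : 0 ≤ ρ) (hρ1 : ρ ≤ 1) (hs0 : 0 ≤ s) (hs1 : s ≤ 1.301)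
    (hU : (0:ℝ) < 3.70 * ρ + 1.5116 * s - 0.4836) :
    (3.70 * ρ + 1.5116 * s - 0.4836) ^ 2 + (1.047198 * ρ + 2 * s) ^ 2
        < 12.566368 * (1.047197 * ρ + 2 * s) := by
  nlinarith [hU, mul_nonneg hρ0 hs0, mul_nonneg (sub_nonneg.mpr hρ1) hs0,
    mul_nonneg hρ0 (sub_nonneg.mpr hs1),
    mul_nonneg (sub_nonneg.mpr hρ1) (sub_nonneg.mpr hs1),
    mul_nonneg hU.le hρ0, mul_nonneg hU.le hs0,
    mul_nonneg hU.le (sub_nonneg.mpr hρ1), mul_nonneg hU.le (sub_nonneg.mpr hs1),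
    mul_nonneg hρ0 hρ0, mul_nonneg hs0 hs0, sq_nonneg (ρ - 1), sq_nonneg (s - 0.3)]

set_option maxHeartbeats 1600000 in
theorem case_reflection :
    ∀ ρ ∈ Set.Icc (0 : ℝ) 1, ∀ s ∈ Set.Icc (0 : ℝ) 1.301,
      Ifun (circPerim0 (ρ * π / 3 + 2 * s)) 5 (0.32 - s) ρ > 0 := by
  intro ρ hρ s hs
  obtain ⟨hρ0, hρ1⟩ := hρ
  obtain ⟨hs0, hs1⟩ := hs
  obtain ⟨D, hDdef⟩ : ∃ D : ℝ, D = (3 * √3 + √15) / 6 := ⟨_, rfl⟩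
  have hDl : (1.5115:ℝ) ≤ D := hDdef ▸ D_lb
  have hDu : D ≤ 1.5116 := hDdef ▸ D_ub
  have hp5pos := p5_pos
  have hp5le := p5_le
  have hπl : (3.141592:ℝ) < π := Real.pi_gt_d6
  have hπu : π < 3.141593 := Real.pi_lt_d6
  obtain ⟨A, hAdef⟩ : ∃ A : ℝ, A = ρ * π / 3 + 2 * s := ⟨_, rfl⟩
  have hA0 : 0 ≤ A := by
    have : 0 ≤ ρ * π := by positivity
    rw [hAdef]; linarith
  obtain ⟨R, hRdef⟩ : ∃ R : ℝ, R = ρ * p5 - (0.32 - s) * D := ⟨_, rfl⟩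
  have hIeq : Ifun (circPerim0 (ρ * π / 3 + 2 * s)) 5 (0.32 - s) ρ
      = Real.sqrt (4 * π * A - A ^ 2) - R := by
    rw [Ifun, B'_eq, circPerim0, hRdef, hDdef, hAdef]
    ring
  rw [hIeq]
  rcases lt_trichotomy R 0 with hR | hR | hR
  · have := Real.sqrt_nonneg (4 * π * A - A ^ 2)
    linarith
  · -- R = 0 : show sqrt positive
    have key : ρ * p5 + s * D = 0.32 * D := by
      rw [hRdef] at hR; linarith
    have hApos : 0 < A := by
      rcases lt_or_eq_of_le hs0 with hspos | hseq
      · have : 0 ≤ ρ * π := by positivity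
        rw [hAdef]; linarith
      · have hρpos : 0 < ρ := by
          rcases lt_or_eq_of_le hρ0 with h | h
          · exact h
          · exfalso
            rw [← h, ← hseq] at key
            simp at key
            rcases key with h' | h'
            · norm_num at h'
            · linarith
        have : 0 < ρ * π := by positivity
        rw [hAdef]; nlinarith
    have hAup : A < 4 * π := by
      have h1 : ρ * π ≤ π := by nlinarith
      rw [hAdef]; nlinarith
    have hpos : 0 < 4 * π * A - A ^ 2 := by nlinarith
    have := Real.sqrt_pos.mpr hpos
    linarith
  · -- R > 0
    have hRpos : 0 < R := hR
    have hprod1 : 0 ≤ ρ * (3.70 - p5) := mul_nonneg hρ0 (by linarith)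
    have hprod2 : 0 ≤ s * (1.5116 - D) := mul_nonneg hs0 (by linarith)
    have hRU : R ≤ 3.70 * ρ + 1.5116 * s - 0.4836 := by
      rw [hRdef]; nlinarith
    have hU : (0:ℝ) < 3.70 * ρ + 1.5116 * s - 0.4836 := lt_of_lt_of_le hRpos hRU
    have hR2 : R ^ 2 ≤ (3.70 * ρ + 1.5116 * s - 0.4836) ^ 2 :=
      pow_le_pow_left₀ hRpos.le hRU 2
    have hπρ : 0 ≤ ρ * (π / 3 - 1.047197) := mul_nonneg hρ0 (by linarith)
    have hπρ' : 0 ≤ ρ * (1.047198 - π / 3) := mul_nonneg hρ0 (by linarith)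
    have hAl : 1.047197 * ρ + 2 * s ≤ A := by
      rw [hAdef]; linarith [hπρ]
    have hAu : A ≤ 1.047198 * ρ + 2 * s := by
      rw [hAdef]; linarith [hπρ']
    have h4c : (0:ℝ) ≤ 4 * π - 12.566368 := by linarith
    have h4A : 0 ≤ (4 * π - 12.566368) * A := mul_nonneg h4c hA0
    have h4πA : 12.566368 * (1.047197 * ρ + 2 * s) ≤ 4 * π * A := by nlinarith
    have hA2 : A ^ 2 ≤ (1.047198 * ρ + 2 * s) ^ 2 :=
      pow_le_pow_left₀ hA0 hAu 2
    have main := quad_main hρ0 hρ1 hs0 hs1 hU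
    have hkey : R ^ 2 < 4 * π * A - A ^ 2 := by linarith
    have := (Real.lt_sqrt hRpos.le).mpr hkey
    linarith
end

section
/- Define ρ₁(5) = 0.913, ρ₁(6) = 0.952, ρ₁(7) = 0.99, and T₁(5) = 0.117, T₁(6) = 0.065, T₁(7) = 0.0134. For each n ∈ {5, 6, 7}, each ρ with ρ₁(n) ≤ ρ ≤ 1, and each t with T₁(n) ≤ t ≤ 1.301, one has I(circPerim0(ρπ/3), n, t, ρ) > 0, i.e., √(4π·(ρπ/3) − (ρπ/3)²) − t·B' + (5 − n)·p₅' − ρ·p₅ > 0. -/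
open Real

/-- The constant `ρ₁` of the proof (values specified only for `n = 5, 6, 7`). -/
noncomputable def rho1 : ℕ → ℝ
  | 5 => 0.913
  | 6 => 0.952
  | 7 => 0.99
  | _ => 1

/-- The constant `T₁` of the proof (values specified only for `n = 5, 6, 7`). -/
noncomputable def T1 : ℕ → ℝ
  | 5 => 0.117
  | 6 => 0.065
  | 7 => 0.0134
  | _ => 0

/-- The constant `T₀` of the proof (values specified only for `n = 5, 6, 7`). -/
noncomputable def T0 : ℕ → ℝ
  | 5 => -0.1382
  | 6 => -0.0711
  | 7 => -0.01362
  | _ => 0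

/-- The constant `ρ₂` of the proof (values specified only for `n = 5, 6, 7`). -/
noncomputable def rho2 : ℕ → ℝ
  | 5 => 0.913
  | 6 => 0.952
  | 7 => 0.99
  | _ => 1

/-- The upper bound `R(n)`: `0.9957` for `n = 5` and `1` otherwise. -/
noncomputable def Rbd : ℕ → ℝ
  | 5 => 0.9957
  | _ => 1

/-- The area lower bound `a(n) = min (3.75 / n², 0.1)`. -/
noncomputable def aFn (n : ℕ) : ℝ := min (3.75 / (n : ℝ) ^ 2) 0.1


set_option maxHeartbeats 1000000 in
private lemma nonneg_of_deriv' (f f' : ℝ → ℝ) (hd : ∀ y : ℝ, HasDerivAt f (f' y) y)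
    (h0 : f 0 = 0) (hf' : ∀ y : ℝ, 0 ≤ y → 0 ≤ f' y) {x : ℝ} (hx : 0 ≤ x) : 0 ≤ f x := by
  have hm : MonotoneOn f (Set.Ici (0:ℝ)) := by
    apply monotoneOn_of_deriv_nonneg (convex_Ici 0)
    · exact fun y _ => (hd y).continuousAt.continuousWithinAt
    · exact fun y _ => (hd y).differentiableAt.differentiableWithinAt
    · intro y hy
      rw [(hd y).deriv]
      exact hf' y (by simpa using (interior_subset (s := Set.Ici (0:ℝ)) hy))
  calc (0:ℝ) = f 0 := h0.symm
    _ ≤ f x := hm (Set.self_mem_Ici) hx hx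

private lemma my_s2 {x : ℝ} (hx : 0 ≤ x) : x - x^3/6 ≤ Real.sin x := by
  have h := nonneg_of_deriv' (fun y => Real.sin y - y + y^3/6)
      (fun y => Real.cos y - 1 + (3:ℝ)*y^2/6)
      (fun y => by
        have := ((Real.hasDerivAt_sin y).sub (hasDerivAt_id y)).add
          ((hasDerivAt_pow 3 y).div_const 6)
        refine this.congr_deriv ?_
        all_goals (push_cast; ring))
      (by norm_num)
      (fun y hy => by nlinarith [Real.one_sub_sq_div_two_le_cos (x := y)]) hx
  linarith

private lemma my_c2 {x : ℝ} (hx : 0 ≤ x) : Real.cos x ≤ 1 - x^2/2 + x^4/24 := by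
  have h := nonneg_of_deriv' (fun y => 1 - y^2/2 + y^4/24 - Real.cos y)
      (fun y => -((2:ℝ)*y)/2 + (4:ℝ)*y^3/24 + Real.sin y)
      (fun y => by
        have := ((((hasDerivAt_pow 2 y).div_const 2).const_sub 1).add
          ((hasDerivAt_pow 4 y).div_const 24)).sub (Real.hasDerivAt_cos y)
        refine this.congr_deriv ?_
        all_goals (push_cast; ring))
      (by norm_num)
      (fun y hy => by nlinarith [my_s2 hy]) hx
  linarith

private lemma my_s3 {x : ℝ} (hx : 0 ≤ x) : Real.sin x ≤ x - x^3/6 + x^5/120 := by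
  have h := nonneg_of_deriv' (fun y => y - y^3/6 + y^5/120 - Real.sin y)
      (fun y => 1 - (3:ℝ)*y^2/6 + (5:ℝ)*y^4/120 - Real.cos y)
      (fun y => by
        have := (((hasDerivAt_id y).sub ((hasDerivAt_pow 3 y).div_const 6)).add
          ((hasDerivAt_pow 5 y).div_const 120)).sub (Real.hasDerivAt_sin y)
        refine this.congr_deriv ?_
        all_goals (push_cast; ring))
      (by norm_num)
      (fun y hy => by nlinarith [my_c2 hy]) hx
  linarith

private lemma my_c3 {x : ℝ} (hx : 0 ≤ x) : 1 - x^2/2 + x^4/24 - x^6/720 ≤ Real.cos x := by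
  have h := nonneg_of_deriv' (fun y => Real.cos y - (1 - y^2/2 + y^4/24 - y^6/720))
      (fun y => -Real.sin y - (-((2:ℝ)*y)/2 + (4:ℝ)*y^3/24 - (6:ℝ)*y^5/720))
      (fun y => by
        have := (Real.hasDerivAt_cos y).sub
          (((((hasDerivAt_pow 2 y).div_const 2).const_sub 1).add
            ((hasDerivAt_pow 4 y).div_const 24)).sub ((hasDerivAt_pow 6 y).div_const 720))
        refine this.congr_deriv ?_
        all_goals (push_cast; ring))
      (by norm_num)
      (fun y hy => by nlinarith [my_s3 hy]) hx
  linarith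

private lemma my_s4 {x : ℝ} (hx : 0 ≤ x) : x - x^3/6 + x^5/120 - x^7/5040 ≤ Real.sin x := by
  have h := nonneg_of_deriv' (fun y => Real.sin y - (y - y^3/6 + y^5/120 - y^7/5040))
      (fun y => Real.cos y - (1 - (3:ℝ)*y^2/6 + (5:ℝ)*y^4/120 - (7:ℝ)*y^6/5040))
      (fun y => by
        have := (Real.hasDerivAt_sin y).sub
          ((((hasDerivAt_id y).sub ((hasDerivAt_pow 3 y).div_const 6)).add
            ((hasDerivAt_pow 5 y).div_const 120)).sub ((hasDerivAt_pow 7 y).div_const 5040))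
        refine this.congr_deriv ?_
        all_goals (push_cast; ring))
      (by norm_num)
      (fun y hy => by nlinarith [my_c3 hy]) hx
  linarith

private lemma my_c4 {x : ℝ} (hx : 0 ≤ x) :
    Real.cos x ≤ 1 - x^2/2 + x^4/24 - x^6/720 + x^8/40320 := by
  have h := nonneg_of_deriv' (fun y => 1 - y^2/2 + y^4/24 - y^6/720 + y^8/40320 - Real.cos y)
      (fun y => -((2:ℝ)*y)/2 + (4:ℝ)*y^3/24 - (6:ℝ)*y^5/720 + (8:ℝ)*y^7/40320 + Real.sin y)
      (fun y => by
        have := (((((hasDerivAt_pow 2 y).div_const 2).const_sub 1).add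
            ((hasDerivAt_pow 4 y).div_const 24)).sub ((hasDerivAt_pow 6 y).div_const 720)).add
            ((hasDerivAt_pow 8 y).div_const 40320) |>.sub (Real.hasDerivAt_cos y)
        refine this.congr_deriv ?_
        all_goals (push_cast; ring))
      (by norm_num)
      (fun y hy => by nlinarith [my_s4 hy]) hx
  linarith

private lemma sqrt5_lb : (2.2360679 : ℝ) ≤ Real.sqrt 5 := by
  nlinarith [Real.sq_sqrt (by norm_num : (5:ℝ) ≥ 0), Real.sqrt_nonneg 5]
private lemma sqrt5_ub : Real.sqrt 5 ≤ 2.2360680 := by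
  nlinarith [Real.sq_sqrt (by norm_num : (5:ℝ) ≥ 0), Real.sqrt_nonneg 5]
private lemma sqrt3_lb : (1.7320508 : ℝ) ≤ Real.sqrt 3 := by
  nlinarith [Real.sq_sqrt (by norm_num : (3:ℝ) ≥ 0), Real.sqrt_nonneg 3]
private lemma sqrt3_ub : Real.sqrt 3 ≤ 1.7320509 := by
  nlinarith [Real.sq_sqrt (by norm_num : (3:ℝ) ≥ 0), Real.sqrt_nonneg 3]
private lemma sqrt11_lb : (3.3166247 : ℝ) ≤ Real.sqrt 11 := by
  nlinarith [Real.sq_sqrt (by norm_num : (11:ℝ) ≥ 0), Real.sqrt_nonneg 11]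
private lemma sqrt3_sq : Real.sqrt 3 ^ 2 = 3 := Real.sq_sqrt (by norm_num)
private lemma sqrt5_sq : Real.sqrt 5 ^ 2 = 5 := Real.sq_sqrt (by norm_num)
private lemma sqrt3_pos : (0:ℝ) < Real.sqrt 3 := Real.sqrt_pos.2 (by norm_num)
private lemma sqrt5_pos : (0:ℝ) < Real.sqrt 5 := Real.sqrt_pos.2 (by norm_num)

private lemma arccos_antitone' {x y : ℝ} (h : x ≤ y) : Real.arccos y ≤ Real.arccos x := by
  rw [Real.arccos_eq_pi_div_two_sub_arcsin, Real.arccos_eq_pi_div_two_sub_arcsin]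
  linarith [Real.monotone_arcsin h]

private lemma arccos_ub : Real.arccos (Real.sqrt 5 / 3) ≤ 0.72973 := by
  have h1 : Real.cos 0.72973 ≤ Real.sqrt 5 / 3 := by
    have h2 := my_c4 (x := 0.72973) (by norm_num)
    have h3 : (1:ℝ) - 0.72973^2/2 + 0.72973^4/24 - 0.72973^6/720 + 0.72973^8/40320
        ≤ Real.sqrt 5 / 3 := by
      nlinarith [Real.sq_sqrt (by norm_num : (5:ℝ) ≥ 0), Real.sqrt_nonneg 5]
    linarith
  calc Real.arccos (Real.sqrt 5 / 3) ≤ Real.arccos (Real.cos 0.72973) := arccos_antitone' h1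
    _ = 0.72973 := Real.arccos_cos (by norm_num) (by nlinarith [Real.pi_gt_d6])

private lemma arccos_lb : (0.44 : ℝ) ≤ Real.arccos (Real.sqrt 5 / 3) := by
  have h1 : Real.sqrt 5 / 3 ≤ Real.cos 0.44 := by
    have := Real.one_sub_sq_div_two_le_cos (x := 0.44)
    nlinarith [sqrt5_ub]
  calc (0.44:ℝ) = Real.arccos (Real.cos 0.44) :=
        (Real.arccos_cos (by norm_num) (by nlinarith [Real.pi_gt_d6])).symm
    _ ≤ Real.arccos (Real.sqrt 5 / 3) := arccos_antitone' h1

private lemma cos_2pi5 : Real.cos (2 * π / 5) = (Real.sqrt 5 - 1) / 4 := by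
  have h : (2 : ℝ) * π / 5 = 2 * (π / 5) := by ring
  rw [h, Real.cos_two_mul, Real.cos_pi_div_five]
  nlinarith [sqrt5_sq]

private lemma sin_2pi5_lb : (0.9510565 : ℝ) ≤ Real.sin (2 * π / 5) := by
  have hsq : Real.sin (2 * π / 5) ^ 2 = (5 + Real.sqrt 5) / 8 := by
    have := Real.sin_sq_add_cos_sq (2 * π / 5)
    rw [cos_2pi5] at this
    nlinarith [sqrt5_sq]
  have hpos : 0 < Real.sin (2 * π / 5) := by
    apply Real.sin_pos_of_pos_of_lt_pi
    · positivity
    · nlinarith [Real.pi_pos]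
  nlinarith [hsq, sqrt5_lb]

private lemma inner_val :
    (Real.cos (2*π/5) + Real.cos (π/3)^2) / Real.sin (π/3)^2 = Real.sqrt 5 / 3 := by
  rw [cos_2pi5, Real.cos_pi_div_three, Real.sin_pi_div_three]
  rw [div_pow, div_pow, sqrt3_sq]
  norm_num
  ring

private lemma sqrt_one_sub : Real.sqrt (1 - (Real.sqrt 5 / 3)^2) = 2/3 := by
  have h : 1 - (Real.sqrt 5 / 3)^2 = (2/3)^2 := by
    rw [div_pow, sqrt5_sq]; norm_num
  rw [h, Real.sqrt_sq (by norm_num)]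

private lemma hne1 : Real.sqrt 5 / 3 ≠ -1 := by nlinarith [sqrt5_pos]
private lemma hne2 : Real.sqrt 5 / 3 ≠ 1 := by nlinarith [sqrt5_sq, sqrt5_pos]

private lemma derivB : deriv (fun x : ℝ => regPerim x 5) (π/3)
    = Real.sqrt 3 * (3 + Real.sqrt 5) / 6 := by
  have hθval : (π - (2*π - π/3)/5)/2 = π/3 := by ring
  have hθ : HasDerivAt (fun x : ℝ => (π - (2*π - x)/5)/2) (-(-1/5)/2) (π/3) :=
    ((((hasDerivAt_id (π/3)).const_sub (2*π)).div_const 5).const_sub π).div_const 2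
  have hcos2 := hθ.cos.pow 2
  have hsin2 := hθ.sin.pow 2
  have hnum := hcos2.const_add (Real.cos (2*π/5))
  have hinner : (Real.cos (2*π/5) + Real.cos ((π - (2*π - π/3)/5)/2)^2) /
      Real.sin ((π - (2*π - π/3)/5)/2)^2 = Real.sqrt 5 / 3 := by
    rw [hθval]; exact inner_val
  have hden_ne : Real.sin ((π - (2*π - π/3)/5)/2)^2 ≠ 0 := by
    rw [hθval, Real.sin_pi_div_three]; positivity
  have hq := hnum.div hsin2 hden_ne
  have harc0 : HasDerivAt Real.arccos (-(1/Real.sqrt (1-(Real.sqrt 5/3)^2)))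
      ((Real.cos (2*π/5) + Real.cos ((π - (2*π - π/3)/5)/2)^2) /
        Real.sin ((π - (2*π - π/3)/5)/2)^2) := by
    rw [hinner]; exact Real.hasDerivAt_arccos hne1 hne2
  have harc := harc0.comp (π/3) hq
  have hfinal := harc.const_mul (5:ℝ)
  have heq : (fun x : ℝ => 5 * ((Real.arccos ∘ fun y : ℝ =>
      (Real.cos (2*π/5) + Real.cos ((π - (2*π - y)/5)/2)^2) /
        Real.sin ((π - (2*π - y)/5)/2)^2) x)) = fun x : ℝ => regPerim x 5 := by
    funext x
    simp only [Function.comp, regPerim]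
  replace hfinal : HasDerivAt (fun x : ℝ => regPerim x 5) _ (π/3) := hfinal
  rw [hfinal.deriv]
  simp only [Pi.pow_apply, Pi.add_apply, Pi.div_apply, Function.comp_apply]
  push_cast
  rw [hθval, sqrt_one_sub, Real.cos_pi_div_three, Real.sin_pi_div_three, cos_2pi5]
  have h3 := sqrt3_sq
  have h5 := sqrt5_sq
  have h3p := sqrt3_pos
  field_simp
  linear_combination (-24 * Real.sqrt 3 ^ 2 - 8 * Real.sqrt 5 * (Real.sqrt 3 ^ 2 + 3)) * h3

private lemma derivN : deriv (fun n : ℝ => regPerim (π/3) n) 5 =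
    Real.arccos (Real.sqrt 5/3) - (4*π/5) * Real.sin (2*π/5)
      + Real.sqrt 3 * π * (3 + Real.sqrt 5) / 18 := by
  have hθval : (π - (2*π - π/3)/5)/2 = π/3 := by ring
  have hφ : HasDerivAt (fun n : ℝ => (π - (2*π - π/3)/n)/2)
      (-((0*5 - (2*π - π/3)*1)/5^2)/2) 5 :=
    (((hasDerivAt_const 5 (2*π - π/3)).div (hasDerivAt_id 5) (by norm_num)).const_sub π).div_const 2
  have hout : HasDerivAt (fun n : ℝ => Real.cos (2*π/n))
      (-Real.sin (2*π/5) * ((0*5 - (2*π)*1)/5^2)) 5 := by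
    have h := ((hasDerivAt_const 5 (2*π)).div (hasDerivAt_id 5) (by norm_num)).cos
    convert h using 2 <;> simp
  have hcos2 := hφ.cos.pow 2
  have hsin2 := hφ.sin.pow 2
  have hnum := hout.add hcos2
  have hinner5 : (Real.cos (2*π/5) + Real.cos ((π - (2*π - π/3)/5)/2)^2) /
      Real.sin ((π - (2*π - π/3)/5)/2)^2 = Real.sqrt 5 / 3 := by
    rw [hθval]; exact inner_val
  have hden_ne : Real.sin ((π - (2*π - π/3)/5)/2)^2 ≠ 0 := by
    rw [hθval, Real.sin_pi_div_three]; positivity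
  have hq := hnum.div hsin2 hden_ne
  have harc0 : HasDerivAt Real.arccos (-(1/Real.sqrt (1-(Real.sqrt 5/3)^2)))
      ((Real.cos (2*π/5) + Real.cos ((π - (2*π - π/3)/5)/2)^2) /
        Real.sin ((π - (2*π - π/3)/5)/2)^2) := by
    rw [hinner5]; exact Real.hasDerivAt_arccos hne1 hne2
  have harc := harc0.comp 5 hq
  have hfinal := (hasDerivAt_id 5).mul harc
  have heq : (fun n : ℝ => id n * ((Real.arccos ∘ fun m : ℝ =>
      (Real.cos (2*π/m) + Real.cos ((π - (2*π - π/3)/m)/2)^2) /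
        Real.sin ((π - (2*π - π/3)/m)/2)^2) n)) = fun n : ℝ => regPerim (π/3) n := by
    funext n
    simp only [Function.comp, regPerim, id_eq]
  replace hfinal : HasDerivAt (fun n : ℝ => regPerim (π/3) n) _ 5 := hfinal
  rw [hfinal.deriv]
  simp only [Function.comp, id_eq, Pi.pow_apply, Pi.add_apply, Pi.div_apply]
  rw [hinner5, hθval, sqrt_one_sub, Real.cos_pi_div_three, Real.sin_pi_div_three, cos_2pi5]
  have h3 := sqrt3_sq
  have h5 := sqrt5_sq
  have h3p := sqrt3_pos
  field_simp
  ring_nf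
  linear_combination (-40 * Real.sqrt 5 * Real.sqrt 3 * π * (Real.sqrt 3 ^ 2 + 3)
    + 576 * Real.sqrt 3 ^ 2 * π * Real.sin (π * (2 / 5)) - 120 * Real.sqrt 3 ^ 3 * π) * h3

private lemma ell_key {ρ : ℝ} (h09 : 0.9 ≤ ρ) (h1 : ρ ≤ 1) {P : ℝ}
    (hPl : 2.2 ≤ P) (hPu : P ≤ 3.7) :
    π * Real.sqrt 11 / 3 - (1 - ρ) * P ≤ circPerim0 (ρ * π / 3) := by
  have pil : (3.141592 : ℝ) < π := Real.pi_gt_d6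
  have piu : π < 3.141593 := Real.pi_lt_d6
  set a := circPerim0 (ρ * π / 3) with ha
  set b := π * Real.sqrt 11 / 3 with hb
  have harg : 0 ≤ 4*π*(ρ*π/3) - (ρ*π/3)^2 := by nlinarith
  have ha0 : 0 ≤ a := Real.sqrt_nonneg _
  have ha2 : a^2 = 4*π*(ρ*π/3) - (ρ*π/3)^2 := by
    rw [ha, circPerim0]; exact Real.sq_sqrt harg
  have hb2 : b^2 = 11*π^2/9 := by
    have h : b^2 = π^2*(Real.sqrt 11^2)/9 := by rw [hb]; ring
    rw [h, Real.sq_sqrt (by norm_num : (0:ℝ) ≤ 11)]; ring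
  have hb0 : 0 ≤ b := by
    rw [hb]; positivity
  have halb : 3.27 ≤ a := by nlinarith
  have hblb : 3.47 ≤ b := by nlinarith
  have hfac : 0 ≤ P*(a+b) - (π^2/9)*(11-ρ) := by nlinarith
  have hprod : 0 ≤ (1-ρ) * (P*(a+b) - (π^2/9)*(11-ρ)) :=
    mul_nonneg (by linarith) hfac
  nlinarith [hprod, ha2, hb2]

set_option maxHeartbeats 1000000 in
theorem case_T_large_pos :
    ∀ n ∈ ({5, 6, 7} : Set ℕ), ∀ ρ ∈ Set.Icc (rho1 n) 1,
      ∀ t ∈ Set.Icc (T1 n) 1.301,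
        Ifun (circPerim0 (ρ * π / 3)) (n : ℝ) t ρ > 0 := by
  have pil : (3.141592 : ℝ) < π := Real.pi_gt_d6
  have piu : π < 3.141593 := Real.pi_lt_d6
  have hK : B' = -(Real.sqrt 3 * (3 + Real.sqrt 5) / 6) := by
    rw [B', derivB]
  have hp5'eq : p5' = Real.arccos (Real.sqrt 5/3) - (4*π/5) * Real.sin (2*π/5)
      + Real.sqrt 3 * π * (3 + Real.sqrt 5) / 18 := by
    rw [p5', derivN]
  have hp5eq : p5 = 5 * Real.arccos (Real.sqrt 5/3) := by
    rw [p5, cos_2pi5]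
    norm_num
    rw [show (4*((Real.sqrt 5 - 1)/4)+1)/3 = Real.sqrt 5/3 by ring]
  set A := Real.arccos (Real.sqrt 5/3) with hA
  have hAub : A ≤ 0.72973 := arccos_ub
  have hAlb : (0.44:ℝ) ≤ A := arccos_lb
  have hKlb : (1.5115225 : ℝ) ≤ Real.sqrt 3 * (3 + Real.sqrt 5) / 6 := by
    nlinarith [sqrt3_lb, sqrt5_lb, mul_nonneg (sub_nonneg.2 sqrt3_lb) (sub_nonneg.2 sqrt5_lb)]
  have hK0 : (0:ℝ) ≤ Real.sqrt 3 * (3 + Real.sqrt 5) / 6 := by linarith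
  have hblb : (3.4731605 : ℝ) ≤ π * Real.sqrt 11 / 3 := by
    nlinarith [sqrt11_lb, mul_nonneg (sub_nonneg.2 pil.le) (sub_nonneg.2 sqrt11_lb)]
  have hSlb : (2.3902651 : ℝ) ≤ (4*π/5) * Real.sin (2*π/5) := by
    nlinarith [sin_2pi5_lb, mul_nonneg (sub_nonneg.2 pil.le) (sub_nonneg.2 sin_2pi5_lb)]
  have hCub : Real.sqrt 3 * π * (3 + Real.sqrt 5) / 18 ≤ 1.5828631 := by
    have h1 : Real.sqrt 3 * π ≤ 1.7320509 * 3.141593 :=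
      mul_le_mul sqrt3_ub piu.le Real.pi_pos.le (by norm_num)
    have h2 : Real.sqrt 3 * π * (3 + Real.sqrt 5) ≤ (1.7320509 * 3.141593) * 5.2360680 := by
      apply mul_le_mul h1 (by linarith [sqrt5_ub]) (by linarith [sqrt5_pos])
      norm_num
    linarith
  intro n hn ρ hρ t ht
  obtain ⟨hρ1, hρ2⟩ := hρ
  obtain ⟨ht1, ht2⟩ := ht
  have hPl : (2.2:ℝ) ≤ 5 * A := by linarith
  have hPu : 5 * A ≤ 3.7 := by linarith
  simp only [Set.mem_insert_iff, Set.mem_singleton_iff] at hn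
  rcases hn with rfl | rfl | rfl
  · have hr : (0.913 : ℝ) ≤ ρ := by
      simpa [rho1] using hρ1
    have htl : (0.117 : ℝ) ≤ t := by
      simpa [T1] using ht1
    have hell := ell_key (by linarith : (0.9:ℝ) ≤ ρ) hρ2 hPl hPu
    have htK : 0.117 * (Real.sqrt 3 * (3 + Real.sqrt 5) / 6)
        ≤ t * (Real.sqrt 3 * (3 + Real.sqrt 5) / 6) :=
      mul_le_mul_of_nonneg_right htl hK0
    rw [Ifun, hK, hp5'eq, hp5eq]
    push_cast
    linarith [hell, htK, hKlb, hblb, hAub, hρ2]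
  · have hr : (0.952 : ℝ) ≤ ρ := by
      simpa [rho1] using hρ1
    have htl : (0.065 : ℝ) ≤ t := by
      simpa [T1] using ht1
    have hell := ell_key (by linarith : (0.9:ℝ) ≤ ρ) hρ2 hPl hPu
    have htK : 0.065 * (Real.sqrt 3 * (3 + Real.sqrt 5) / 6)
        ≤ t * (Real.sqrt 3 * (3 + Real.sqrt 5) / 6) :=
      mul_le_mul_of_nonneg_right htl hK0
    rw [Ifun, hK, hp5'eq, hp5eq]
    push_cast
    linarith [hell, htK, hKlb, hblb, hAub, hρ2, hSlb, hCub]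
  · have hr : (0.99 : ℝ) ≤ ρ := by
      simpa [rho1] using hρ1
    have htl : (0.0134 : ℝ) ≤ t := by
      simpa [T1] using ht1
    have hell := ell_key (by linarith : (0.9:ℝ) ≤ ρ) hρ2 hPl hPu
    have htK : 0.0134 * (Real.sqrt 3 * (3 + Real.sqrt 5) / 6)
        ≤ t * (Real.sqrt 3 * (3 + Real.sqrt 5) / 6) :=
      mul_le_mul_of_nonneg_right htl hK0
    rw [Ifun, hK, hp5'eq, hp5eq]
    push_cast
    linarith [hell, htK, hKlb, hblb, hAub, hρ2, hSlb, hCub]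
end
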